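/- Every vector φ ∈ (ℂ^2)^{⊗3} has tensor rank at most 3; i.e., φ can be written as a sum of at most 3 product vectors a ⊗ b ⊗ c. -/

import Mathlib

open scoped BigOperators

/-- Product vector `a ⊗ b ⊗ c` in `(ℂ^2)^{⊗3}`. -/
noncomputable def tens2 (a b c : Fin 2 → ℂ) : Fin 2 × Fin 2 × Fin 2 → ℂ :=
  fun p => a p.1 * b p.2.1 * c p.2.2

/-- A 2×2 matrix with vanishing determinant is rank ≤ 1. -/
lemma rank1_aux (M : Fin 2 → Fin 2 → ℂ) (h : M 0 0 * M 1 1 = M 0 1 * M 1 0) :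
    ∃ u v : Fin 2 → ℂ, ∀ j k, M j k = u j * v k := by
  by_cases h0 : M 0 0 = 0
  · by_cases h1 : M 0 1 = 0
    · refine ⟨![0, 1], ![M 1 0, M 1 1], fun j k => ?_⟩
      fin_cases j <;> fin_cases k <;> simp [h0, h1]
    · have h10 : M 1 0 = 0 := by
        have h' : M 0 1 * M 1 0 = 0 := by rw [← h, h0]; ring
        rcases mul_eq_zero.mp h' with h'' | h''
        · exact absurd h'' h1
        · exact h''
      refine ⟨![M 0 1, M 1 1], ![0, 1], fun j k => ?_⟩
      fin_cases j <;> fin_cases k <;> simp [h0, h10]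
  · refine ⟨![M 0 0, M 1 0], ![1, M 0 1 / M 0 0], fun j k => ?_⟩
    fin_cases j <;> fin_cases k <;> simp <;> field_simp
    linear_combination h

theorem stmt10 (φ : Fin 2 × Fin 2 × Fin 2 → ℂ) :
    ∃ a b c : Fin 3 → (Fin 2 → ℂ),
      φ = ∑ i : Fin 3, tens2 (a i) (b i) (c i) := by
  by_cases hd : φ (0,0,0) * φ (0,1,1) - φ (0,0,1) * φ (0,1,0) = 0
  · -- first slice is rank ≤ 1
    obtain ⟨u, v, hu⟩ := rank1_aux (fun j k => φ (0, j, k)) (by have h' := sub_eq_zero.mp hd; simpa using h')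
    have h00 := hu 0 0; have h01 := hu 0 1; have h10 := hu 1 0; have h11 := hu 1 1
    simp only [Prod.mk_zero_zero, Prod.mk_one_one] at h00 h01 h10 h11
    refine ⟨![![1, 0], ![0, 1], ![0, 1]], ![u, ![1, 0], ![0, 1]],
      ![v, fun k => φ (1, 0, k), fun k => φ (1, 1, k)], ?_⟩
    funext p
    obtain ⟨i, j, k⟩ := p
    fin_cases i <;> fin_cases j <;> fin_cases k <;>
      simp only [tens2, Fin.sum_univ_three, Prod.mk_zero_zero, Prod.mk_one_one,
        Matrix.cons_val_zero, Matrix.cons_val_one, Matrix.head_cons,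
        Matrix.cons_val_two, Matrix.tail_cons, Fin.mk_zero, Fin.mk_one,
        Matrix.cons_val_succ, Pi.add_apply, Prod.fst_zero, Prod.snd_zero,
        Prod.fst_one, Prod.snd_one,
        Matrix.vecHead, Matrix.vecTail, Function.comp, mul_zero, zero_mul,
        mul_one, one_mul, add_zero, zero_add] <;>
      first
        | linear_combination h00
        | linear_combination h01
        | linear_combination h10
        | linear_combination h11
  · -- generic case: choose a root of the quadratic det(M1 - α M0) = 0
    set d : ℂ := φ (0,0,0) * φ (0,1,1) - φ (0,0,1) * φ (0,1,0) with hdd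
    obtain ⟨s, hs⟩ := IsAlgClosed.exists_pow_nat_eq (k := ℂ)
        ((φ (1,0,0) * φ (0,1,1) + φ (0,0,0) * φ (1,1,1)
          - φ (1,0,1) * φ (0,1,0) - φ (0,0,1) * φ (1,1,0)) ^ 2
          - 4 * d * (φ (1,0,0) * φ (1,1,1) - φ (1,0,1) * φ (1,1,0))) zero_lt_two
    set c1 : ℂ := φ (1,0,0) * φ (0,1,1) + φ (0,0,0) * φ (1,1,1)
          - φ (1,0,1) * φ (0,1,0) - φ (0,0,1) * φ (1,1,0) with hcc
    set e : ℂ := φ (1,0,0) * φ (1,1,1) - φ (1,0,1) * φ (1,1,0) with hee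
    set α : ℂ := (c1 + s) / (2 * d) with hα
    have h2 : (2 : ℂ) * d ≠ 0 := mul_ne_zero two_ne_zero hd
    have expand : (2 * d) * α = c1 + s := by
      rw [hα, mul_div_cancel₀ _ h2]
    have h4 : (4 * d) * (d * α ^ 2 - c1 * α + e) = 0 := by
      linear_combination (2 * d * α - c1 + s) * expand + hs
    have key : d * α ^ 2 - c1 * α + e = 0 := by
      rcases mul_eq_zero.mp h4 with h' | h'
      · exact absurd h' (by simpa using mul_ne_zero (by norm_num : (4:ℂ) ≠ 0) hd)
      · exact h'
    clear_value d c1 e α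
    obtain ⟨u, v, hu⟩ := rank1_aux (fun j k => φ (1, j, k) - α * φ (0, j, k))
      (by linear_combination key - α ^ 2 * hdd + α * hcc - hee)
    have h00 := hu 0 0; have h01 := hu 0 1; have h10 := hu 1 0; have h11 := hu 1 1
    simp only [Prod.mk_zero_zero, Prod.mk_one_one] at h00 h01 h10 h11
    refine ⟨![![1, α], ![1, α], ![0, 1]], ![![1, 0], ![0, 1], u],
      ![fun k => φ (0, 0, k), fun k => φ (0, 1, k), v], ?_⟩
    funext p
    obtain ⟨i, j, k⟩ := p
    fin_cases i <;> fin_cases j <;> fin_cases k <;>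
      simp only [tens2, Fin.sum_univ_three, Prod.mk_zero_zero, Prod.mk_one_one,
        Matrix.cons_val_zero, Matrix.cons_val_one, Matrix.head_cons,
        Matrix.cons_val_two, Matrix.tail_cons, Fin.mk_zero, Fin.mk_one,
        Matrix.cons_val_succ, Pi.add_apply, Prod.fst_zero, Prod.snd_zero,
        Prod.fst_one, Prod.snd_one,
        Matrix.vecHead, Matrix.vecTail, Function.comp, mul_zero, zero_mul,
        mul_one, one_mul, add_zero, zero_add] <;>
      first
        | ring1
        | linear_combination h00
        | linear_combination h01
        | linear_combination h10
        | linear_combination h11
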